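/- The sum over k >= 1 of p_k^{(1)} equals 1, where p_k^{(1)} = 2^{-(k-1)} * integral from 0 to infinity of [x^{-1/2} e^{-x} Gamma(-1/2,x)^{k-1}] / [x^{-1/2} e^{-x} + gamma(1/2,x)]^k dx. -/

import Mathlib

open Set MeasureTheory

/-- Upper incomplete gamma function. -/
noncomputable def Gup (ν x : ℝ) : ℝ := ∫ t in Ioi x, Real.exp (-t) * t ^ (ν - 1)

/-- Lower incomplete gamma function. -/
noncomputable def glow (ν x : ℝ) : ℝ := ∫ t in Ioc (0 : ℝ) x, Real.exp (-t) * t ^ (ν - 1)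

noncomputable def p1 (k : ℕ) : ℝ :=
  (1 / 2 ^ (k - 1)) * ∫ x in Ioi (0 : ℝ),
    (x ^ (-(1 / 2) : ℝ) * Real.exp (-x) * Gup (-(1 / 2)) x ^ (k - 1)) /
      (x ^ (-(1 / 2) : ℝ) * Real.exp (-x) + glow (1 / 2) x) ^ k

namespace SumP1

open Real Filter Topology

noncomputable def f (x : ℝ) : ℝ := x ^ (-(1 / 2) : ℝ) * Real.exp (-x)

noncomputable def D (x : ℝ) : ℝ := f x + glow (1 / 2) x

noncomputable def s (x : ℝ) : ℝ := (D x - Real.sqrt π) / D x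

noncomputable def ψ (k : ℕ) (x : ℝ) : ℝ := f x / D x * s x ^ k

lemma intOn_Ioi {x p : ℝ} (hx : 0 < x) (hp : p ≤ 0) :
    IntegrableOn (fun t => Real.exp (-t) * t ^ p) (Ioi x) := by
  have hg : IntegrableOn (fun t => x ^ p * Real.exp (-t)) (Ioi x) := by
    have : IntegrableOn (fun t => Real.exp (-t)) (Ioi x) := by
      simpa using exp_neg_integrableOn_Ioi x one_pos
    exact this.const_mul _
  refine Integrable.mono' hg ?_ ?_
  · refine Measurable.aestronglyMeasurable ?_
    have h1 : Measurable fun t : ℝ => Real.exp (-t) := Real.measurable_exp.comp measurable_neg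
    have h2 : Measurable fun t : ℝ => t ^ p := by measurability
    exact h1.mul h2
  · filter_upwards [ae_restrict_mem measurableSet_Ioi] with t ht
    have htx : 0 < t := hx.trans ht
    rw [Real.norm_eq_abs, abs_of_nonneg (by positivity)]
    rw [mul_comm (x ^ p)]
    exact mul_le_mul_of_nonneg_left
      (Real.rpow_le_rpow_of_nonpos hx (le_of_lt ht) hp) (Real.exp_pos _).le

lemma f_integrableOn : IntegrableOn f (Ioi 0) := by
  have := Real.GammaIntegral_convergent one_half_pos
  refine this.congr_fun (fun x hx => ?_) measurableSet_Ioi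
  unfold f
  rw [mul_comm]
  norm_num

lemma integral_f : ∫ x in Ioi (0:ℝ), f x = Real.sqrt π := by
  rw [← Real.Gamma_one_half_eq, Real.Gamma_eq_integral one_half_pos]
  refine setIntegral_congr_fun measurableSet_Ioi (fun x hx => ?_)
  unfold f
  rw [mul_comm]
  norm_num

lemma f_pos {x : ℝ} (hx : 0 < x) : 0 < f x :=
  mul_pos (Real.rpow_pos_of_pos hx _) (Real.exp_pos _)

lemma glow_nonneg (x : ℝ) : 0 ≤ glow (1 / 2) x := by
  refine setIntegral_nonneg measurableSet_Ioc (fun t ht => ?_)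
  have : (0:ℝ) ≤ t := ht.1.le
  positivity

lemma glow_mono : Monotone (glow (1 / 2)) := by
  intro a b hab
  unfold glow
  refine setIntegral_mono_set ?_ ?_ ?_
  · exact (Real.GammaIntegral_convergent one_half_pos).mono_set Ioc_subset_Ioi_self
  · filter_upwards [ae_restrict_mem measurableSet_Ioc] with t ht
    have : (0:ℝ) ≤ t := ht.1.le
    positivity
  · exact HasSubset.Subset.eventuallyLE (Ioc_subset_Ioc_right hab)

lemma glow_measurable : Measurable (glow (1 / 2)) := glow_mono.measurable

lemma f_measurable : Measurable f := by
  have h1 : Measurable fun x : ℝ => x ^ (-(1 / 2) : ℝ) := by measurability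
  have h2 : Measurable fun x : ℝ => Real.exp (-x) := Real.measurable_exp.comp measurable_neg
  exact h1.mul h2

lemma D_measurable : Measurable D := f_measurable.add glow_measurable

lemma D_pos {x : ℝ} (hx : 0 < x) : 0 < D x :=
  lt_of_lt_of_le (f_pos hx) (le_add_of_nonneg_right (glow_nonneg x))

lemma Gup_nonneg {x ν : ℝ} (hx : 0 < x) : 0 ≤ Gup ν x := by
  refine setIntegral_nonneg measurableSet_Ioi (fun t ht => ?_)
  have : (0:ℝ) ≤ t := (hx.trans ht).le
  positivity

/-- FTC identity: `Gup (-1/2) x + 2 Gup (1/2) x = 2 f x` for `x > 0`. -/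
lemma Gup_identity {x : ℝ} (hx : 0 < x) :
    Gup (-(1 / 2)) x + 2 * Gup (1 / 2) x = 2 * f x := by
  set F : ℝ → ℝ := fun t => -2 * (t ^ (-(1 / 2) : ℝ) * Real.exp (-t)) with hF
  have hderiv : ∀ t ∈ Ici x, HasDerivAt F
      (Real.exp (-t) * t ^ (-(1 / 2) - 1 : ℝ) + 2 * (Real.exp (-t) * t ^ ((1 / 2 : ℝ) - 1))) t := by
    intro t ht
    have ht0 : 0 < t := lt_of_lt_of_le hx ht
    have h1 : HasDerivAt (fun u : ℝ => u ^ (-(1 / 2) : ℝ))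
        (-(1 / 2) * t ^ (-(1 / 2) - 1 : ℝ)) t :=
      Real.hasDerivAt_rpow_const (Or.inl ht0.ne')
    have h2 : HasDerivAt (fun u : ℝ => Real.exp (-u)) (Real.exp (-t) * (-1)) t := by
      exact (hasDerivAt_neg t).exp
    have h3 := ((h1.mul h2).const_mul (-2 : ℝ))
    convert h3 using 1
    · rfl
    · rfl
    · rfl
    have e1 : t ^ ((1 / 2 : ℝ) - 1) = t ^ (-(1 / 2) : ℝ) := by norm_num
    have e2 : t ^ (-(1 / 2) - 1 : ℝ) = t ^ (-(1 / 2) : ℝ) / t := by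
      rw [← Real.rpow_sub_one ht0.ne']
    rw [e1, e2]
    ring
  have hint1 : IntegrableOn (fun t => Real.exp (-t) * t ^ (-(1 / 2) - 1 : ℝ)) (Ioi x) :=
    intOn_Ioi hx (by norm_num)
  have hint2 : IntegrableOn (fun t => Real.exp (-t) * t ^ ((1 / 2 : ℝ) - 1)) (Ioi x) :=
    intOn_Ioi hx (by norm_num)
  have hint : IntegrableOn (fun t => Real.exp (-t) * t ^ (-(1 / 2) - 1 : ℝ)
      + 2 * (Real.exp (-t) * t ^ ((1 / 2 : ℝ) - 1))) (Ioi x) :=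
    hint1.add (hint2.const_mul 2)
  have htend : Tendsto F atTop (𝓝 0) := by
    have h1 : Tendsto (fun t : ℝ => t ^ (-(1 / 2) : ℝ)) atTop (𝓝 0) :=
      tendsto_rpow_neg_atTop (by norm_num)
    have h2 : Tendsto (fun t : ℝ => Real.exp (-t)) atTop (𝓝 0) :=
      Real.tendsto_exp_neg_atTop_nhds_zero
    have h3 : Tendsto (fun t : ℝ => -2 * (t ^ (-(1 / 2) : ℝ) * Real.exp (-t))) atTop
        (𝓝 (-2 * (0 * 0))) := (h1.mul h2).const_mul (-2 : ℝ)
    have h4 : (-2 : ℝ) * (0 * 0) = 0 := by ring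
    rw [h4] at h3
    exact h3
  have key := integral_Ioi_of_hasDerivAt_of_tendsto' hderiv hint htend
  rw [MeasureTheory.integral_add hint1 (hint2.const_mul 2),
    MeasureTheory.integral_const_mul] at key
  have hGup1 : Gup (-(1 / 2)) x = ∫ t in Ioi x, Real.exp (-t) * t ^ (-(1 / 2) - 1 : ℝ) := rfl
  have hGup2 : Gup (1 / 2) x = ∫ t in Ioi x, Real.exp (-t) * t ^ ((1 / 2 : ℝ) - 1) := rfl
  rw [hGup1, hGup2, key, hF]
  unfold f
  ring

lemma glow_add_Gup {x : ℝ} (hx : 0 < x) :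
    glow (1 / 2) x + Gup (1 / 2) x = Real.sqrt π := by
  have hi1 : IntegrableOn (fun t => Real.exp (-t) * t ^ ((1 / 2 : ℝ) - 1)) (Ioc 0 x) :=
    (Real.GammaIntegral_convergent one_half_pos).mono_set Ioc_subset_Ioi_self
  have hi2 : IntegrableOn (fun t => Real.exp (-t) * t ^ ((1 / 2 : ℝ) - 1)) (Ioi x) :=
    (Real.GammaIntegral_convergent one_half_pos).mono_set (Ioi_subset_Ioi hx.le)
  have hu := setIntegral_union (Ioc_disjoint_Ioi le_rfl) measurableSet_Ioi hi1 hi2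
    (f := fun t => Real.exp (-t) * t ^ ((1 / 2 : ℝ) - 1)) (μ := volume)
  rw [Ioc_union_Ioi_eq_Ioi hx.le] at hu
  have : glow (1 / 2) x + Gup (1 / 2) x
      = ∫ t in Ioi (0:ℝ), Real.exp (-t) * t ^ ((1 / 2 : ℝ) - 1) := hu.symm
  rw [this, ← Real.Gamma_eq_integral one_half_pos, Real.Gamma_one_half_eq]

/-- Key identity: `D x = √π + Gup (-1/2) x / 2` for `x > 0`. -/
lemma D_eq {x : ℝ} (hx : 0 < x) : D x = Real.sqrt π + Gup (-(1 / 2)) x / 2 := by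
  have h1 := Gup_identity hx
  have h2 := glow_add_Gup hx
  unfold D
  linarith

lemma sqrtpi_le_D {x : ℝ} (hx : 0 < x) : Real.sqrt π ≤ D x := by
  have := Gup_nonneg (ν := -(1/2)) hx
  rw [D_eq hx]; linarith

lemma sqrtpi_pos : 0 < Real.sqrt π := Real.sqrt_pos.mpr Real.pi_pos

lemma s_nonneg {x : ℝ} (hx : 0 < x) : 0 ≤ s x :=
  div_nonneg (by linarith [sqrtpi_le_D hx, sqrtpi_pos]) (D_pos hx).le

lemma s_lt_one {x : ℝ} (hx : 0 < x) : s x < 1 := by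
  rw [s, div_lt_one (D_pos hx)]
  linarith [sqrtpi_pos]

lemma ψ_measurable (k : ℕ) : Measurable (ψ k) := by
  unfold ψ s
  exact ((f_measurable.div D_measurable).mul
    (((D_measurable.sub measurable_const).div D_measurable).pow measurable_const))

lemma ψ_nonneg {k : ℕ} {x : ℝ} (hx : 0 < x) : 0 ≤ ψ k x :=
  mul_nonneg (div_nonneg (f_pos hx).le (D_pos hx).le) (pow_nonneg (s_nonneg hx) k)

lemma ψ_le {k : ℕ} {x : ℝ} (hx : 0 < x) : ψ k x ≤ f x / Real.sqrt π := by
  have h1 : ψ k x ≤ f x / D x * 1 := by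
    refine mul_le_mul_of_nonneg_left ?_ (div_nonneg (f_pos hx).le (D_pos hx).le)
    exact pow_le_one₀ (s_nonneg hx) (s_lt_one hx).le
  rw [mul_one] at h1
  refine h1.trans ?_
  exact div_le_div_of_nonneg_left (f_pos hx).le sqrtpi_pos (sqrtpi_le_D hx)

lemma F_integrableOn : IntegrableOn (fun x => f x / Real.sqrt π) (Ioi 0) :=
  f_integrableOn.div_const _

lemma ψ_integrableOn (k : ℕ) : IntegrableOn (ψ k) (Ioi 0) := by
  refine Integrable.mono' F_integrableOn ((ψ_measurable k).aestronglyMeasurable) ?_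
  filter_upwards [ae_restrict_mem measurableSet_Ioi] with x hx
  rw [Real.norm_eq_abs, abs_of_nonneg (ψ_nonneg hx)]
  exact ψ_le hx

lemma p1_eq (k : ℕ) : p1 (k + 1) = ∫ x in Ioi (0:ℝ), ψ k x := by
  unfold p1
  simp only [Nat.add_sub_cancel]
  rw [← MeasureTheory.integral_const_mul]
  refine setIntegral_congr_fun measurableSet_Ioi (fun x hx => ?_)
  have hx : (0:ℝ) < x := hx
  have hD := D_pos hx
  have hG : Gup (-(1 / 2)) x = 2 * (D x - Real.sqrt π) := by
    have := D_eq hx; linarith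
  show (1 / 2 ^ k) * (f x * Gup (-(1 / 2)) x ^ k / D x ^ (k + 1)) = ψ k x
  rw [hG]
  unfold ψ s
  rw [mul_pow, div_pow, pow_succ]
  have h2 : (2:ℝ) ^ k ≠ 0 := by positivity
  field_simp

lemma partial_sum_eq (n : ℕ) {x : ℝ} (hx : 0 < x) :
    ∑ k ∈ Finset.range n, ψ k x = f x / Real.sqrt π * (1 - s x ^ n) := by
  have hs1 : s x ≠ 1 := (s_lt_one hx).ne
  have hgeom : ∑ k ∈ Finset.range n, s x ^ k = (1 - s x ^ n) / (1 - s x) := by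
    rw [geom_sum_eq hs1]
    rw [div_eq_div_iff (by intro h; apply hs1; linarith) (by intro h; apply hs1; linarith)]
    ring
  have hD : D x ≠ 0 := (D_pos hx).ne'
  have hone_sub : 1 - s x = Real.sqrt π / D x := by
    rw [s]
    field_simp
    ring
  calc ∑ k ∈ Finset.range n, ψ k x
      = f x / D x * ∑ k ∈ Finset.range n, s x ^ k := by
        rw [Finset.mul_sum]; rfl
    _ = f x / D x * ((1 - s x ^ n) / (Real.sqrt π / D x)) := by rw [hgeom, hone_sub]
    _ = f x / Real.sqrt π * (1 - s x ^ n) := by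
        have hD := (D_pos hx).ne'
        have hc := sqrtpi_pos.ne'
        field_simp

lemma tendsto_partial_sums :
    Tendsto (fun n => ∑ k ∈ Finset.range n, ∫ x in Ioi (0:ℝ), ψ k x) atTop (𝓝 1) := by
  have h1 : ∀ n, ∫ x in Ioi (0:ℝ), (∑ k ∈ Finset.range n, ψ k x)
      = ∑ k ∈ Finset.range n, ∫ x in Ioi (0:ℝ), ψ k x := fun n =>
    integral_finset_sum _ (fun k _ => ψ_integrableOn k)
  have h2 : Tendsto (fun n => ∫ x in Ioi (0:ℝ), (∑ k ∈ Finset.range n, ψ k x)) atTop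
      (𝓝 (∫ x in Ioi (0:ℝ), f x / Real.sqrt π)) := by
    refine integral_tendsto_of_tendsto_of_monotone
      (fun n => integrable_finset_sum _ (fun k _ => ψ_integrableOn k)) F_integrableOn ?_ ?_
    · filter_upwards [ae_restrict_mem measurableSet_Ioi] with x hx
      intro a b hab
      refine Finset.sum_le_sum_of_subset_of_nonneg (Finset.range_subset_range.mpr hab) ?_
      intro k _ _
      exact ψ_nonneg hx
    · filter_upwards [ae_restrict_mem measurableSet_Ioi] with x hx
      have hx : (0:ℝ) < x := hx
      have hs0 := s_nonneg hx
      have hs1 := s_lt_one hx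
      have : Tendsto (fun n => s x ^ n) atTop (𝓝 0) :=
        tendsto_pow_atTop_nhds_zero_of_lt_one hs0 hs1
      have h3 : Tendsto (fun n => f x / Real.sqrt π * (1 - s x ^ n)) atTop
          (𝓝 (f x / Real.sqrt π * (1 - 0))) :=
        (tendsto_const_nhds.sub this).const_mul _
      rw [sub_zero, mul_one] at h3
      refine Tendsto.congr (fun n => (partial_sum_eq n hx).symm) h3
  have h4 : ∫ x in Ioi (0:ℝ), f x / Real.sqrt π = 1 := by
    rw [MeasureTheory.integral_div, integral_f, div_self sqrtpi_pos.ne']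
  rw [h4] at h2
  exact h2.congr (fun n => h1 n)

lemma p1_nonneg (k : ℕ) : 0 ≤ p1 (k + 1) := by
  rw [p1_eq]
  exact setIntegral_nonneg measurableSet_Ioi (fun x hx => ψ_nonneg hx)

end SumP1

theorem sum_p1 : ∑' k : ℕ, p1 (k + 1) = 1 := by
  have key : Filter.Tendsto (fun n => ∑ k ∈ Finset.range n, p1 (k + 1)) Filter.atTop (nhds 1) := by
    have := SumP1.tendsto_partial_sums
    refine this.congr (fun n => ?_)
    exact Finset.sum_congr rfl (fun k _ => (SumP1.p1_eq k).symm)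
  have hsum : Summable (fun k => p1 (k + 1)) := by
    refine summable_of_sum_range_le (c := 1) (fun k => SumP1.p1_nonneg k) (fun n => ?_)
    have hmono : Monotone (fun n => ∑ k ∈ Finset.range n, p1 (k + 1)) := by
      intro a b hab
      exact Finset.sum_le_sum_of_subset_of_nonneg (Finset.range_subset_range.mpr hab)
        (fun k _ _ => SumP1.p1_nonneg k)
    exact hmono.ge_of_tendsto key n
  exact tendsto_nhds_unique (hsum.hasSum.tendsto_sum_nat) key
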